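/- Let H be a real inner product space, let x, y, y′ ∈ H, and let 0 < m ≤ M be such that m ≤ ‖y‖ ≤ M and m ≤ ‖y′‖ ≤ M. Then ‖ ⟨x, y⟩ y / ‖y‖² − ⟨x, y′⟩ y′ / ‖y′‖² ‖ ≤ 4 ‖x‖ (M³/m⁴) ‖y − y′‖. -/

import Mathlib

set_option maxHeartbeats 1000000 in
/-- In a real inner product space, if `0 < m ≤ ‖y‖, ‖y′‖ ≤ M`, then
the projections of `x` onto the spans of `y` and `y′` satisfy
`‖⟨x,y⟩y/‖y‖² − ⟨x,y′⟩y′/‖y′‖²‖ ≤ 4‖x‖(M³/m⁴)‖y − y′‖`. -/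
theorem stmt_17 {H : Type*} [NormedAddCommGroup H] [InnerProductSpace ℝ H]
    (x y y' : H) (m M : ℝ) (hm : 0 < m) (hmM : m ≤ M)
    (hy1 : m ≤ ‖y‖) (hy2 : ‖y‖ ≤ M) (hy'1 : m ≤ ‖y'‖) (hy'2 : ‖y'‖ ≤ M) :
    ‖((inner ℝ x y : ℝ) / ‖y‖ ^ 2) • y - ((inner ℝ x y' : ℝ) / ‖y'‖ ^ 2) • y'‖ ≤
      4 * ‖x‖ * (M ^ 3 / m ^ 4) * ‖y - y'‖ := by
  have hM : (0:ℝ) < M := hm.trans_le hmM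
  have hny : (0:ℝ) < ‖y‖ := hm.trans_le hy1
  have hny' : (0:ℝ) < ‖y'‖ := hm.trans_le hy'1
  set a : ℝ := inner ℝ x y with ha
  set a' : ℝ := inner ℝ x y' with ha'
  set c : ℝ := a / ‖y‖ ^ 2 - a' / ‖y'‖ ^ 2 with hc
  clear_value c
  clear_value a a'
  have hdecomp : (a / ‖y‖ ^ 2) • y - (a' / ‖y'‖ ^ 2) • y'
      = (a / ‖y‖ ^ 2) • (y - y') + c • y' := by
    rw [hc, smul_sub, sub_smul]; abel
  have haa' : |a - a'| ≤ ‖x‖ * ‖y - y'‖ := by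
    have : a - a' = inner ℝ x (y - y') := by rw [ha, ha', inner_sub_right]
    rw [this]
    exact abs_real_inner_le_norm x (y - y')
  have ha'bd : |a'| ≤ ‖x‖ * M := by
    calc |a'| ≤ ‖x‖ * ‖y'‖ := by rw [ha']; exact abs_real_inner_le_norm x y'
      _ ≤ ‖x‖ * M := by nlinarith [norm_nonneg x]
  have habd : |a| ≤ ‖x‖ * ‖y‖ := by rw [ha]; exact abs_real_inner_le_norm x y
  have hsq : |(‖y'‖:ℝ) ^ 2 - ‖y‖ ^ 2| ≤ 2 * M * ‖y - y'‖ := by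
    have h1 : |‖y'‖ - ‖y‖| ≤ ‖y' - y‖ := abs_norm_sub_norm_le y' y
    have h2 : ‖y' - y‖ = ‖y - y'‖ := norm_sub_rev y' y
    have : (‖y'‖:ℝ) ^ 2 - ‖y‖ ^ 2 = (‖y'‖ + ‖y‖) * (‖y'‖ - ‖y‖) := by ring
    rw [this, abs_mul]
    have h3 : |‖y'‖ + ‖y‖| ≤ 2 * M := by rw [abs_of_pos (by linarith)]; linarith
    have h4 : |‖y'‖ - ‖y‖| ≤ ‖y - y'‖ := h2 ▸ h1
    calc |‖y'‖ + ‖y‖| * |‖y'‖ - ‖y‖| ≤ (2 * M) * ‖y - y'‖ :=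
      mul_le_mul h3 h4 (abs_nonneg _) (by linarith)
      _ = 2 * M * ‖y - y'‖ := rfl
  -- bound on c
  have hcformula : c = ((a - a') * ‖y'‖ ^ 2 + a' * (‖y'‖ ^ 2 - ‖y‖ ^ 2))
      / (‖y‖ ^ 2 * ‖y'‖ ^ 2) := by
    rw [hc]; field_simp; ring
  have hcbd : |c| ≤ 3 * ‖x‖ * M ^ 2 / m ^ 4 * ‖y - y'‖ := by
    rw [hcformula]
    rw [abs_div]
    have hden : |(‖y‖:ℝ) ^ 2 * ‖y'‖ ^ 2| = ‖y‖ ^ 2 * ‖y'‖ ^ 2 := by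
      rw [abs_of_pos]; positivity
    rw [hden]
    have hdenlb : m ^ 4 ≤ ‖y‖ ^ 2 * ‖y'‖ ^ 2 := by
      have e1 : m ^ 2 ≤ ‖y‖ ^ 2 := by nlinarith
      have e2 : m ^ 2 ≤ ‖y'‖ ^ 2 := by nlinarith
      nlinarith [mul_le_mul e1 e2 (by positivity) (by positivity)]
    have hnum : |(a - a') * ‖y'‖ ^ 2 + a' * (‖y'‖ ^ 2 - ‖y‖ ^ 2)|
        ≤ 3 * ‖x‖ * M ^ 2 * ‖y - y'‖ := by
      calc |(a - a') * ‖y'‖ ^ 2 + a' * (‖y'‖ ^ 2 - ‖y‖ ^ 2)|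
          ≤ |(a - a')| * |‖y'‖ ^ 2| + |a'| * |‖y'‖ ^ 2 - ‖y‖ ^ 2| := by
            rw [← abs_mul, ← abs_mul]; exact abs_add_le _ _
        _ ≤ (‖x‖ * ‖y - y'‖) * M ^ 2 + (‖x‖ * M) * (2 * M * ‖y - y'‖) := by
            have h5 : |(‖y'‖:ℝ) ^ 2| ≤ M ^ 2 := by
              rw [abs_of_nonneg (by positivity)]; nlinarith
            have := mul_le_mul haa' h5 (abs_nonneg _) (by positivity)
            have := mul_le_mul ha'bd hsq (abs_nonneg _) (by positivity)
            linarith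
        _ = 3 * ‖x‖ * M ^ 2 * ‖y - y'‖ := by ring
    calc |(a - a') * ‖y'‖ ^ 2 + a' * (‖y'‖ ^ 2 - ‖y‖ ^ 2)| / (‖y‖ ^ 2 * ‖y'‖ ^ 2)
        ≤ (3 * ‖x‖ * M ^ 2 * ‖y - y'‖) / m ^ 4 := by
          apply div_le_div₀ (by positivity) hnum (by positivity) hdenlb
      _ = 3 * ‖x‖ * M ^ 2 / m ^ 4 * ‖y - y'‖ := by ring
  rw [hdecomp]
  have h1 : ‖(a / ‖y‖ ^ 2) • (y - y')‖ ≤ ‖x‖ / m * ‖y - y'‖ := by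
    rw [norm_smul, Real.norm_eq_abs, abs_div, abs_of_pos (show (0:ℝ) < ‖y‖^2 by positivity)]
    have : |a| / ‖y‖ ^ 2 ≤ ‖x‖ / m := by
      rw [div_le_div_iff₀ (by positivity) hm]
      nlinarith [norm_nonneg x, abs_nonneg a]
    exact mul_le_mul_of_nonneg_right this (norm_nonneg _)
  have h2 : ‖c • y'‖ ≤ (3 * ‖x‖ * M ^ 2 / m ^ 4 * ‖y - y'‖) * M := by
    rw [norm_smul, Real.norm_eq_abs]
    exact mul_le_mul hcbd hy'2 (norm_nonneg _) (by positivity)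
  calc ‖(a / ‖y‖ ^ 2) • (y - y') + c • y'‖
      ≤ ‖(a / ‖y‖ ^ 2) • (y - y')‖ + ‖c • y'‖ := norm_add_le _ _
    _ ≤ ‖x‖ / m * ‖y - y'‖ + (3 * ‖x‖ * M ^ 2 / m ^ 4 * ‖y - y'‖) * M := by linarith
    _ ≤ 4 * ‖x‖ * (M ^ 3 / m ^ 4) * ‖y - y'‖ := by
        have key : ‖x‖ / m ≤ ‖x‖ * (M ^ 3 / m ^ 4) := by
          have h6 : m ^ 3 ≤ M ^ 3 := pow_le_pow_left₀ hm.le hmM 3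
          have h7 : (1:ℝ) / m ≤ M ^ 3 / m ^ 4 := by
            rw [div_le_div_iff₀ hm (by positivity)]
            nlinarith [mul_le_mul_of_nonneg_right h6 hm.le]
          calc ‖x‖ / m = ‖x‖ * (1 / m) := by ring
            _ ≤ ‖x‖ * (M ^ 3 / m ^ 4) :=
                mul_le_mul_of_nonneg_left h7 (norm_nonneg x)
        calc ‖x‖ / m * ‖y - y'‖ + (3 * ‖x‖ * M ^ 2 / m ^ 4 * ‖y - y'‖) * M
            = ‖x‖ / m * ‖y - y'‖ + 3 * (‖x‖ * (M ^ 3 / m ^ 4)) * ‖y - y'‖ := by ring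
          _ ≤ ‖x‖ * (M ^ 3 / m ^ 4) * ‖y - y'‖
              + 3 * (‖x‖ * (M ^ 3 / m ^ 4)) * ‖y - y'‖ := by
              have := mul_le_mul_of_nonneg_right key (norm_nonneg (y - y'))
              linarith
          _ = 4 * ‖x‖ * (M ^ 3 / m ^ 4) * ‖y - y'‖ := by ring
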